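/- arXiv:1405.4026 — 3 statements merged into one kernel-verified Lean document; each statement's English description precedes it below -/
import Mathlib

section
/- Every idempotent element of a commutative Z-graded ring is homogeneous of degree zero. -/
/-- Every idempotent element of a commutative `ℤ`-graded ring is homogeneous of degree zero. -/
theorem stmt0 {A : Type*} [CommRing A] (𝒜 : ℤ → AddSubgroup A) [GradedRing 𝒜]
    (e : A) (he : e * e = e) : e ∈ 𝒜 0 := by
  classical
  set r := DirectSum.decompose 𝒜 e with hr
  have hrr : r * r = r := by rw [hr, ← DirectSum.decompose_mul, he]
  -- the multiplication formula for components
  have hmul : ∀ n : ℤ, ((r n : A)) =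
      ∑ ij ∈ (r.support ×ˢ r.support).filter (fun ij : ℤ × ℤ => ij.1 + ij.2 = n),
        ((r ij.1 : A) * (r ij.2 : A)) := by
    intro n
    have := DirectSum.coe_mul_apply 𝒜 r r n
    rwa [hrr] at this
  have hzero : ∀ i : ℤ, i ∉ r.support → (r i : A) = 0 := by
    intro i hi
    rw [DFinsupp.notMem_support_iff.mp hi]
    rfl
  set N := nilradical A with hN
  have hsq : ∀ x : A, x * x ∈ N → x ∈ N := by
    intro x hx
    obtain ⟨m, hm⟩ := mem_nilradical.mp hx
    exact mem_nilradical.mpr ⟨2 * m, by rw [pow_mul, pow_two, hm]⟩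
  -- bounds on the support
  set B : ℤ := (insert (0:ℤ) r.support).max' (by simp) with hB
  have hBle : ∀ j ∈ r.support, j ≤ B :=
    fun j hj => Finset.le_max' _ j (Finset.mem_insert_of_mem hj)
  set C : ℤ := (insert (0:ℤ) r.support).min' (by simp) with hC
  have hCle : ∀ j ∈ r.support, C ≤ j :=
    fun j hj => Finset.min'_le _ j (Finset.mem_insert_of_mem hj)
  -- components of positive degree are nilpotent
  have keypos : ∀ k : ℕ, ∀ i : ℤ, 0 < i → B < i + k → (r i : A) ∈ N := by
    intro k
    induction k with
    | zero =>
      intro i hi hBi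
      have : i ∉ r.support := fun hmem => by
        have := hBle i hmem; omega
      rw [hzero i this]; exact zero_mem _
    | succ k IH =>
      intro i hi hBi
      by_cases hmem : i ∈ r.support
      · have h2 := hmul (i + i)
        have hii : ((i, i) : ℤ × ℤ) ∈
            (r.support ×ˢ r.support).filter (fun ij : ℤ × ℤ => ij.1 + ij.2 = i + i) := by
          simp [hmem]
        rw [← Finset.sum_erase_add _ _ hii] at h2
        have hsum : (∑ p ∈ ((r.support ×ˢ r.support).filter
            (fun ij : ℤ × ℤ => ij.1 + ij.2 = i + i)).erase (i, i),
            ((r p.1 : A) * (r p.2 : A))) ∈ N := by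
          refine Ideal.sum_mem _ ?_
          intro p hp
          obtain ⟨hpne, hpmem⟩ := Finset.mem_erase.mp hp
          obtain ⟨hpprod, hpadd⟩ := Finset.mem_filter.mp hpmem
          rcases lt_trichotomy p.1 i with h1 | h1 | h1
          · have h2' : i < p.2 := by omega
            exact Ideal.mul_mem_left _ _ (IH p.2 (by omega) (by omega))
          · exfalso; apply hpne
            have : p.2 = i := by omega
            exact Prod.ext h1 this
          · exact Ideal.mul_mem_right _ _ (IH p.1 (by omega) (by omega))
        have h2i : (r (i + i) : A) ∈ N := IH (i + i) (by omega) (by omega)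
        have : (r i : A) * (r i : A) ∈ N := by
          have heq : (r i : A) * (r i : A) = (r (i + i) : A) -
              (∑ p ∈ ((r.support ×ˢ r.support).filter
                (fun ij : ℤ × ℤ => ij.1 + ij.2 = i + i)).erase (i, i),
                ((r p.1 : A) * (r p.2 : A))) := by
            rw [h2]; ring
          rw [heq]
          exact sub_mem h2i hsum
        exact hsq _ this
      · rw [hzero i hmem]; exact zero_mem _
  -- components of negative degree are nilpotent
  have keyneg : ∀ k : ℕ, ∀ i : ℤ, i < 0 → i - k < C → (r i : A) ∈ N := by
    intro k
    induction k with
    | zero =>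
      intro i hi hCi
      have : i ∉ r.support := fun hmem => by
        have := hCle i hmem; omega
      rw [hzero i this]; exact zero_mem _
    | succ k IH =>
      intro i hi hCi
      by_cases hmem : i ∈ r.support
      · have h2 := hmul (i + i)
        have hii : ((i, i) : ℤ × ℤ) ∈
            (r.support ×ˢ r.support).filter (fun ij : ℤ × ℤ => ij.1 + ij.2 = i + i) := by
          simp [hmem]
        rw [← Finset.sum_erase_add _ _ hii] at h2
        have hsum : (∑ p ∈ ((r.support ×ˢ r.support).filter
            (fun ij : ℤ × ℤ => ij.1 + ij.2 = i + i)).erase (i, i),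
            ((r p.1 : A) * (r p.2 : A))) ∈ N := by
          refine Ideal.sum_mem _ ?_
          intro p hp
          obtain ⟨hpne, hpmem⟩ := Finset.mem_erase.mp hp
          obtain ⟨hpprod, hpadd⟩ := Finset.mem_filter.mp hpmem
          rcases lt_trichotomy p.1 i with h1 | h1 | h1
          · exact Ideal.mul_mem_right _ _ (IH p.1 (by omega) (by omega))
          · exfalso; apply hpne
            have : p.2 = i := by omega
            exact Prod.ext h1 this
          · have h2' : p.2 < i := by omega
            exact Ideal.mul_mem_left _ _ (IH p.2 (by omega) (by omega))
        have h2i : (r (i + i) : A) ∈ N := IH (i + i) (by omega) (by omega)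
        have : (r i : A) * (r i : A) ∈ N := by
          have heq : (r i : A) * (r i : A) = (r (i + i) : A) -
              (∑ p ∈ ((r.support ×ˢ r.support).filter
                (fun ij : ℤ × ℤ => ij.1 + ij.2 = i + i)).erase (i, i),
                ((r p.1 : A) * (r p.2 : A))) := by
            rw [h2]; ring
          rw [heq]
          exact sub_mem h2i hsum
        exact hsq _ this
      · rw [hzero i hmem]; exact zero_mem _
  have hnil : ∀ i : ℤ, i ≠ 0 → (r i : A) ∈ N := by
    intro i hi
    rcases lt_or_gt_of_ne hi with h | h
    · have hk := Int.self_le_toNat (i - C + 1)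
      exact keyneg (i - C + 1).toNat i h (by omega)
    · have hk := Int.self_le_toNat (B - i + 1)
      exact keypos (B - i + 1).toNat i h (by omega)
  -- the sum of nonzero-degree components is nilpotent
  have hesum : ∑ j ∈ r.support, (r j : A) = e := DirectSum.sum_support_decompose 𝒜 e
  set e0 : A := (r 0 : A) with he0def
  have hd : e - e0 ∈ N := by
    rw [← hesum]
    by_cases h0 : (0 : ℤ) ∈ r.support
    · rw [← Finset.sum_erase_add _ _ h0, add_sub_cancel_right]
      exact Ideal.sum_mem _ fun j hj => hnil j (Finset.ne_of_mem_erase hj)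
    · rw [he0def, hzero 0 h0, sub_zero]
      exact Ideal.sum_mem _ fun j hj => hnil j (by rintro rfl; exact h0 hj)
  set d : A := e - e0 with hdd
  have hde : e0 = e - d := by rw [hdd]; ring
  have hX : e0 - e0 ^ 2 ∈ N := by
    have hcalc : e0 - e0 ^ 2 = (e - e * e) - d + 2 * e * d - d * d := by
      rw [hde]; ring
    rw [hcalc, he, sub_self]
    refine sub_mem (add_mem (sub_mem (zero_mem _) hd) ?_) ?_
    · exact Ideal.mul_mem_left _ _ hd
    · exact Ideal.mul_mem_left _ _ hd
  obtain ⟨n, hn⟩ := mem_nilradical.mp hX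
  have hn' : (e0 - e0 ^ 2) ^ (n + 1) = 0 := by rw [pow_succ, hn, zero_mul]
  have hf : IsIdempotentElem (1 - (1 - e0 ^ (n + 1)) ^ (n + 1)) :=
    isIdempotentElem_one_sub_one_sub_pow_pow e0 (n + 1) hn'
  set f : A := 1 - (1 - e0 ^ (n + 1)) ^ (n + 1) with hfdef
  -- f and e agree modulo the nilradical
  have hee : IsIdempotentElem e := he
  have hfe : f - e ∈ N := by
    have hπd : Ideal.Quotient.mk N d = 0 := Ideal.Quotient.eq_zero_iff_mem.mpr hd
    have hπe0 : Ideal.Quotient.mk N e0 = Ideal.Quotient.mk N e := by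
      rw [hde, map_sub, hπd, sub_zero]
    have hπe : IsIdempotentElem (Ideal.Quotient.mk N e) := by
      show _ * _ = _
      rw [← map_mul, he]
    have hπf : Ideal.Quotient.mk N f = Ideal.Quotient.mk N e := by
      rw [hfdef]
      simp only [map_sub, map_one, map_pow, hπe0]
      rw [hπe.pow_succ_eq, hπe.one_sub.pow_succ_eq, sub_sub_cancel]
    rw [← Ideal.Quotient.eq_zero_iff_mem, map_sub, hπf, sub_self]
  have hfeq : f = e :=
    eq_of_isNilpotent_sub_of_isIdempotentElem_of_commute hf hee
      (mem_nilradical.mp hfe) (Commute.all f e)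
  -- f lies in degree zero
  have he0 : e0 ∈ 𝒜 0 := SetLike.coe_mem _
  have h1 : (1 : A) ∈ 𝒜 0 := SetLike.one_mem_graded 𝒜
  have hp1 : e0 ^ (n + 1) ∈ 𝒜 0 := by
    have := SetLike.pow_mem_graded (n + 1) he0
    rwa [smul_zero] at this
  have hp2 : (1 - e0 ^ (n + 1)) ^ (n + 1) ∈ 𝒜 0 := by
    have := SetLike.pow_mem_graded (n + 1) (sub_mem h1 hp1)
    rwa [smul_zero] at this
  have hfmem : f ∈ 𝒜 0 := sub_mem h1 hp2
  rwa [hfeq] at hfmem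
end

section
/- Let R be a commutative graded ring. The graded prime spectrum Spec^g(R) is connected if and only if Spec(R_0) is connected, where R_0 is the degree-zero component. -/
open DirectSum

section Helpers

lemma myPreconnectedSpace_of_clopen {X : Type*} [TopologicalSpace X]
    (h : ∀ s : Set X, IsClopen s → s = ∅ ∨ s = Set.univ) : PreconnectedSpace X := by
  constructor
  rw [isPreconnected_iff_subset_of_fully_disjoint_closed isClosed_univ]
  intro u v hu hv huv hdis
  have huv' : u = vᶜ := by
    ext x
    constructor
    · intro hx hxv
      exact hdis.ne_of_mem hx hxv rfl
    · intro hx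
      rcases huv (Set.mem_univ x) with h' | h'
      · exact h'
      · exact absurd h' hx
  have hcl : IsClopen u := ⟨hu, huv' ▸ hv.isOpen_compl⟩
  rcases h u hcl with rfl | rfl
  · right
    simpa using huv
  · left
    exact le_rfl

lemma myIdem_eq_zero {R : Type*} [CommRing R] {x : R} (hx : IsIdempotentElem x)
    (hn : IsNilpotent x) : x = 0 := by
  obtain ⟨n, hn⟩ := hn
  rw [← hx.pow_succ_eq n, pow_succ, hn, zero_mul]

lemma myConnectedSpace_primeSpectrum_iff {R : Type*} [CommRing R] :
    ConnectedSpace (PrimeSpectrum R) ↔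
      Nontrivial R ∧ ∀ e : R, IsIdempotentElem e → e = 0 ∨ e = 1 := by
  constructor
  · intro h
    obtain ⟨p⟩ := h.toNonempty
    have hnt : Nontrivial R := by
      by_contra hR
      rw [not_nontrivial_iff_subsingleton] at hR
      exact p.isPrime.ne_top (Subsingleton.elim _ _)
    refine ⟨hnt, fun e he => ?_⟩
    have hclopen : IsClopen (↑(PrimeSpectrum.basicOpen e) : Set (PrimeSpectrum R)) :=
      PrimeSpectrum.isClopen_iff.mpr ⟨e, he, rfl⟩
    rcases isClopen_iff.mp hclopen with hs | hs
    · left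
      have : PrimeSpectrum.basicOpen e = ⊥ := by
        ext1; simpa using hs
      exact myIdem_eq_zero he ((PrimeSpectrum.basicOpen_eq_bot_iff e).mp this)
    · right
      have h1e : IsNilpotent (1 - e) := by
        rw [nilpotent_iff_mem_prime]
        intro J hJ
        have hp : (⟨J, hJ⟩ : PrimeSpectrum R) ∈ (↑(PrimeSpectrum.basicOpen e) : Set _) := by
          rw [hs]; trivial
        have heJ : e ∉ J := hp
        have : e * (1 - e) = 0 := by rw [mul_sub, mul_one, he.eq, sub_self]
        rcases hJ.mem_or_mem (this ▸ J.zero_mem) with h' | h'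
        · exact absurd h' heJ
        · exact h'
      have := myIdem_eq_zero he.one_sub h1e
      linear_combination -this
  · rintro ⟨hnt, hid⟩
    have : Nonempty (PrimeSpectrum R) := inferInstance
    refine { toPreconnectedSpace := ?_, toNonempty := this }
    apply myPreconnectedSpace_of_clopen
    intro s hs
    obtain ⟨e, he, rfl⟩ := PrimeSpectrum.isClopen_iff.mp hs
    rcases hid e he with rfl | rfl
    · left; simp
    · right; simp

variable {A : Type*} [CommRing A] (𝒜 : ℤ → AddSubgroup A) [GradedRing 𝒜]

lemma myMem_homogeneousCore_iff (I : Ideal A) (x : A) :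
    x ∈ (I.homogeneousCore 𝒜).toIdeal ↔ ∀ i, (decompose 𝒜 x i : A) ∈ I := by
  classical
  constructor
  · intro hx i
    exact Ideal.toIdeal_homogeneousCore_le 𝒜 I ((I.homogeneousCore 𝒜).isHomogeneous i hx)
  · intro hx
    rw [← DirectSum.sum_support_decompose 𝒜 x]
    exact Ideal.sum_mem _ fun i _ =>
      HomogeneousIdeal.mem_iff.mp
        (Ideal.mem_homogeneousCore_of_homogeneous_of_mem
          ⟨i, SetLike.coe_mem _⟩ (hx i))

lemma myIdem_mem_grade_zero {e : A} (he : IsIdempotentElem e) : e ∈ 𝒜 0 := by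
  classical
  have hmul : e * (1 - e) = 0 := by rw [mul_sub, mul_one, he.eq, sub_self]
  -- Step A: nonzero-degree components are nilpotent
  have hnil : ∀ i : ℤ, i ≠ 0 → (decompose 𝒜 e i : A) ∈ nilradical A := by
    intro i hi
    rw [mem_nilradical, nilpotent_iff_mem_prime]
    intro J hJ
    have hcore : (J.homogeneousCore 𝒜).toIdeal.IsPrime :=
      Ideal.IsPrime.homogeneousCore (𝒜 := 𝒜) hJ
    have h0 : e * (1 - e) ∈ (J.homogeneousCore 𝒜).toIdeal := by
      rw [hmul]; exact Ideal.zero_mem _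
    rcases hcore.mem_or_mem h0 with h' | h'
    · exact Ideal.toIdeal_homogeneousCore_le 𝒜 J
        ((J.homogeneousCore 𝒜).isHomogeneous i h')
    · have h2 := (J.homogeneousCore 𝒜).isHomogeneous i h'
      have hd : (decompose 𝒜 (1 - e) i : A) = -(decompose 𝒜 e i : A) := by
        have h1 : (decompose 𝒜 (1 : A) i : A) = 0 :=
          DirectSum.decompose_of_mem_ne 𝒜 (SetLike.one_mem_graded 𝒜) (Ne.symm hi)
        have := map_sub (GradedRing.proj 𝒜 i) 1 e
        simp only [GradedRing.proj_apply] at this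
        rw [this, h1, zero_sub]
      rw [hd] at h2
      have := Ideal.toIdeal_homogeneousCore_le 𝒜 J h2
      simpa using J.neg_mem this
  set e₀ : A := (decompose 𝒜 e 0 : A) with he₀
  have hsub : e - e₀ ∈ nilradical A := by
    have hsumm := DirectSum.sum_support_decompose 𝒜 e
    have heq : e - e₀ = ∑ i ∈ (decompose 𝒜 e).support.erase 0, (decompose 𝒜 e i : A) := by
      by_cases h0 : (0 : ℤ) ∈ (decompose 𝒜 e).support
      · have hae := Finset.add_sum_erase _ (fun i => (decompose 𝒜 e i : A)) h0
        rw [hsumm] at hae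
        linear_combination -hae
      · have hz : e₀ = 0 := by
          rw [he₀]
          rw [DFinsupp.notMem_support_iff] at h0
          rw [h0]; simp
        rw [hz, sub_zero, Finset.erase_eq_of_notMem h0]
        exact hsumm.symm
    rw [heq]
    exact Ideal.sum_mem _ fun i hi => hnil i (Finset.ne_of_mem_erase hi)
  have h1 : e₀ - e₀ ^ 2 ∈ nilradical A := by
    have hfac : e₀ - e₀ ^ 2 = (e - e₀) * (e + e₀ - 1) := by
      linear_combination -he.eq
    rw [hfac]
    exact Ideal.mul_mem_right _ _ hsub
  obtain ⟨n, hn⟩ := mem_nilradical.mp h1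
  have hn' : (e₀ - e₀ ^ 2) ^ (n + 1) = 0 := by rw [pow_succ, hn, zero_mul]
  have hf : IsIdempotentElem (1 - (1 - e₀ ^ (n + 1)) ^ (n + 1)) :=
    isIdempotentElem_one_sub_one_sub_pow_pow e₀ (n + 1) hn'
  set f : A := 1 - (1 - e₀ ^ (n + 1)) ^ (n + 1) with hfdef
  have hf0 : f ∈ 𝒜 0 := by
    have h₀ : e₀ ∈ SetLike.GradeZero.subring 𝒜 := SetLike.coe_mem _
    have : f ∈ SetLike.GradeZero.subring 𝒜 :=
      sub_mem (one_mem _) (pow_mem (sub_mem (one_mem _) (pow_mem h₀ _)) _)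
    exact this
  -- e - f nilpotent
  have hef : e - f ∈ nilradical A := by
    rw [← Ideal.Quotient.eq]
    set π := Ideal.Quotient.mk (nilradical A)
    have hπe : IsIdempotentElem (π e) := by
      rw [IsIdempotentElem, ← map_mul, he.eq]
    have hπ0 : π e₀ = π e := by
      rw [Ideal.Quotient.eq]
      simpa using (nilradical A).neg_mem hsub
    have hπe1 : IsIdempotentElem (1 - π e) := hπe.one_sub
    show π e = π f
    rw [hfdef]
    rw [map_sub, map_one, map_pow, map_sub, map_one, map_pow, hπ0, hπe.pow_succ_eq n,
      hπe1.pow_succ_eq n, sub_sub_cancel]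
  have : e = f :=
    eq_of_isNilpotent_sub_of_isIdempotentElem he hf (mem_nilradical.mp hef)
  rw [this]
  exact hf0

end Helpers

/-- For a commutative `ℤ`-graded ring `A`, the graded prime spectrum (the subspace of the
Zariski spectrum consisting of homogeneous prime ideals) is connected iff the prime spectrum
of the degree-zero part `𝒜 0` is connected. -/
theorem stmt5 {A : Type*} [CommRing A] (𝒜 : ℤ → AddSubgroup A) [GradedRing 𝒜] :
    ConnectedSpace {p : PrimeSpectrum A // p.asIdeal.IsHomogeneous 𝒜} ↔
      ConnectedSpace (PrimeSpectrum ↥(𝒜 0)) := by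
  constructor
  · intro h
    rw [myConnectedSpace_primeSpectrum_iff]
    obtain ⟨⟨p, hp⟩⟩ := h.toNonempty
    have hA : Nontrivial A := by
      by_contra hR
      rw [not_nontrivial_iff_subsingleton] at hR
      exact p.isPrime.ne_top (Subsingleton.elim _ _)
    refine ⟨⟨0, 1, fun h01 => zero_ne_one (α := A) (congrArg Subtype.val h01)⟩, fun ε hε => ?_⟩
    by_contra hcon
    push_neg at hcon
    obtain ⟨hne0, hne1⟩ := hcon
    have hxid : IsIdempotentElem (ε : A) := congrArg Subtype.val hε
    have hx0 : (ε : A) ≠ 0 := fun h' => hne0 (Subtype.ext h')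
    have hx1 : (ε : A) ≠ 1 := fun h' => hne1 (Subtype.ext h')
    set x : A := (ε : A) with hxdef
    set s : Set {q : PrimeSpectrum A // q.asIdeal.IsHomogeneous 𝒜} :=
      Subtype.val ⁻¹' PrimeSpectrum.zeroLocus {x} with hsdef
    have hclopen : IsClopen s := by
      constructor
      · exact (PrimeSpectrum.isClosed_zeroLocus _).preimage continuous_subtype_val
      · rw [hsdef, PrimeSpectrum.zeroLocus_eq_basicOpen_of_isIdempotentElem x hxid]
        exact (PrimeSpectrum.basicOpen (1 - x)).isOpen.preimage continuous_subtype_val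
    have hprec := h.toPreconnectedSpace
    have hmem : ∀ (J : Ideal A) (hJ : J.IsPrime), x ∈ J →
        (⟨⟨(J.homogeneousCore 𝒜).toIdeal, Ideal.IsPrime.homogeneousCore (𝒜 := 𝒜) hJ⟩,
          (J.homogeneousCore 𝒜).isHomogeneous⟩ :
          {q : PrimeSpectrum A // q.asIdeal.IsHomogeneous 𝒜}) ∈ s := by
      intro J hJ hxJ
      simp only [hsdef, Set.mem_preimage, PrimeSpectrum.mem_zeroLocus,
        Set.singleton_subset_iff]
      exact HomogeneousIdeal.mem_iff.mp
        (Ideal.mem_homogeneousCore_of_homogeneous_of_mem ⟨0, ε.2⟩ hxJ)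
    rcases isClopen_iff.mp hclopen with hs | hs
    · -- s nonempty: find prime not containing 1 - x
      have h1x : ¬ IsNilpotent (1 - x) := fun hn =>
        hx1 (by have := myIdem_eq_zero hxid.one_sub hn; linear_combination -this)
      rw [nilpotent_iff_mem_prime] at h1x
      push_neg at h1x
      obtain ⟨J, hJ, hJx⟩ := h1x
      have hxJ : x ∈ J := by
        have hm : x * (1 - x) = 0 := by rw [mul_sub, mul_one, hxid.eq, sub_self]
        rcases hJ.mem_or_mem (hm ▸ J.zero_mem) with h' | h'
        · exact h'
        · exact absurd h' hJx
      have := hmem J hJ hxJ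
      rw [hs] at this
      exact this
    · -- s ≠ univ: find prime not containing x
      have hxn : ¬ IsNilpotent x := fun hn => hx0 (myIdem_eq_zero hxid hn)
      rw [nilpotent_iff_mem_prime] at hxn
      push_neg at hxn
      obtain ⟨J, hJ, hJx⟩ := hxn
      have hmem2 : (⟨⟨(J.homogeneousCore 𝒜).toIdeal,
          Ideal.IsPrime.homogeneousCore (𝒜 := 𝒜) hJ⟩,
          (J.homogeneousCore 𝒜).isHomogeneous⟩ :
          {q : PrimeSpectrum A // q.asIdeal.IsHomogeneous 𝒜}) ∈ s := by
        rw [hs]; trivial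
      simp only [hsdef, Set.mem_preimage, PrimeSpectrum.mem_zeroLocus,
        Set.singleton_subset_iff] at hmem2
      exact hJx (Ideal.toIdeal_homogeneousCore_le 𝒜 J hmem2)
  · intro h
    rw [myConnectedSpace_primeSpectrum_iff] at h
    obtain ⟨hnt0, hid0⟩ := h
    -- A is nontrivial
    have hA : Nontrivial A := by
      by_contra hR
      rw [not_nontrivial_iff_subsingleton] at hR
      exact absurd (Subsingleton.elim _ _) (exists_pair_ne (↥(𝒜 0))).choose_spec.choose_spec
    -- Spec A is connected
    have hconnA : ConnectedSpace (PrimeSpectrum A) := by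
      rw [myConnectedSpace_primeSpectrum_iff]
      refine ⟨hA, fun e he => ?_⟩
      have hmem := myIdem_mem_grade_zero 𝒜 he
      have hε : IsIdempotentElem (⟨e, hmem⟩ : 𝒜 0) := Subtype.ext he.eq
      rcases hid0 _ hε with h' | h'
      · left; exact congrArg Subtype.val h'
      · right; exact congrArg Subtype.val h'
    -- continuous surjection from Spec A
    let r : PrimeSpectrum A → {q : PrimeSpectrum A // q.asIdeal.IsHomogeneous 𝒜} :=
      fun p => ⟨⟨(p.asIdeal.homogeneousCore 𝒜).toIdeal,
        Ideal.IsPrime.homogeneousCore (𝒜 := 𝒜) p.isPrime⟩,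
        (p.asIdeal.homogeneousCore 𝒜).isHomogeneous⟩
    have hsurj : Function.Surjective r := by
      rintro ⟨q, hq⟩
      refine ⟨q, ?_⟩
      apply Subtype.ext
      apply PrimeSpectrum.ext
      exact hq.toIdeal_homogeneousCore_eq_self
    have hcont : Continuous r := by
      apply Continuous.subtype_mk
      rw [PrimeSpectrum.isTopologicalBasis_basic_opens.continuous_iff]
      rintro _ ⟨a, rfl⟩
      have : (fun p : PrimeSpectrum A =>
          (⟨(p.asIdeal.homogeneousCore 𝒜).toIdeal,
            Ideal.IsPrime.homogeneousCore (𝒜 := 𝒜) p.isPrime⟩ : PrimeSpectrum A)) ⁻¹'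
          ↑(PrimeSpectrum.basicOpen a) =
          ⋃ i : ℤ, ↑(PrimeSpectrum.basicOpen ((decompose 𝒜 a i : A))) := by
        ext p
        simp only [Set.mem_preimage, SetLike.mem_coe, PrimeSpectrum.mem_basicOpen,
          Set.mem_iUnion]
        rw [myMem_homogeneousCore_iff 𝒜 p.asIdeal a]
        push_neg
        rfl
      rw [this]
      exact isOpen_iUnion fun i => (PrimeSpectrum.basicOpen _).isOpen
    exact hsurj.connectedSpace hcont
end

section
/- Let A be a Z-graded bialgebra over a field k that is positively graded with A_0 a local ring (gr-local), finite-dimensional in each degree. Then A admits an antipode, i.e., there exists a k-linear map S : A → A with S ∗ id = η∘ε = id ∗ S for the convolution product, making A a graded Hopf algebra. -/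
/-- Nakayama for a (possibly noncommutative) local ring: a finitely generated
left ideal `N` with `N ≤ m • N`, where `m` is a two-sided ideal of nonunits, is zero. -/
theorem aux_nakayama {R : Type*} [Ring R] [IsLocalRing R] (m : Ideal R)
    (hm2 : ∀ a ∈ m, ∀ r : R, a * r ∈ m)
    (hmn : ∀ a ∈ m, ¬ IsUnit a)
    (N : Submodule R R) (hN : N ≤ m • N) :
    ∀ s : Finset R, Submodule.span R (s : Set R) = N → N = ⊥ := by
  classical
  have hrep : ∀ (s : Finset R), Submodule.span R (s : Set R) = N →
      ∀ y ∈ m • N, ∃ b : R → R, (∀ z, b z ∈ m) ∧ ∑ z ∈ s, b z * z = y := by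
    intro s hs y hy
    refine Submodule.smul_induction_on hy ?_ ?_
    · intro r hr n hn
      rw [← hs] at hn
      obtain ⟨f, -, hf⟩ := Submodule.mem_span_finset.mp hn
      refine ⟨fun z => r * f z, fun z => hm2 r hr _, ?_⟩
      rw [smul_eq_mul, ← hf, Finset.mul_sum]
      simp [mul_assoc, smul_eq_mul]
    · rintro x y ⟨b1, hb1, rfl⟩ ⟨b2, hb2, rfl⟩
      exact ⟨b1 + b2, fun z => m.add_mem (hb1 z) (hb2 z), by simp [add_mul, Finset.sum_add_distrib]⟩
  intro s
  induction s using Finset.strongInduction with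
  | _ s ih =>
    intro hs
    rcases Finset.eq_empty_or_nonempty s with rfl | ⟨x, hx⟩
    · simpa using hs.symm
    · have hxN : x ∈ N := hs ▸ Submodule.subset_span hx
      obtain ⟨b, hb, hbx⟩ := hrep s hs x (hN hxN)
      rw [← Finset.add_sum_erase _ _ hx] at hbx
      have hunit : IsUnit (1 - b x) := by
        rcases IsLocalRing.isUnit_or_isUnit_of_add_one
          (a := 1 - b x) (b := b x) (sub_add_cancel 1 (b x)) with h | h
        · exact h
        · exact absurd h (hmn _ (hb x))
      have hxspan : x ∈ Submodule.span R ((s.erase x : Finset R) : Set R) := by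
        obtain ⟨u, hu⟩ := hunit
        have h1 : (1 - b x) * x = ∑ z ∈ s.erase x, b z * z := by
          rw [sub_mul, one_mul]
          exact sub_eq_iff_eq_add'.mpr hbx.symm
        have hsum : (∑ z ∈ s.erase x, b z * z) ∈
            Submodule.span R ((s.erase x : Finset R) : Set R) := by
          refine Submodule.sum_mem _ fun z hz => ?_
          exact Submodule.smul_mem _ (b z) (Submodule.subset_span hz)
        have hxe : x = ↑u⁻¹ * ∑ z ∈ s.erase x, b z * z := by
          rw [← h1, ← mul_assoc, ← hu, Units.inv_mul, one_mul]
        have hmem := Submodule.smul_mem (Submodule.span R ((s.erase x : Finset R) : Set R)) (↑u⁻¹) hsum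
        rw [smul_eq_mul] at hmem
        rwa [← hxe] at hmem
      have herase : Submodule.span R ((s.erase x : Finset R) : Set R) = N := by
        refine le_antisymm ?_ ?_
        · rw [← hs]
          exact Submodule.span_mono (by exact_mod_cast Finset.erase_subset x s)
        · rw [← hs]
          refine Submodule.span_le.mpr fun z hz => ?_
          rcases eq_or_ne z x with rfl | hzx
          · exact hxspan
          · exact Submodule.subset_span (Finset.mem_erase.mpr ⟨hzx, hz⟩)
      exact ih (s.erase x) (Finset.erase_ssubset hx) herase

/-- In a finite-dimensional local algebra over a field, a two-sided ideal of
nonunits is nilpotent (products of enough elements vanish). -/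
theorem aux_nilpotent {k R : Type*} [Field k] [Ring R] [Algebra k R] [IsLocalRing R]
    [FiniteDimensional k R] (m : Ideal R)
    (hm2 : ∀ a ∈ m, ∀ r : R, a * r ∈ m)
    (hmn : ∀ a ∈ m, ¬ IsUnit a) :
    ∃ r : ℕ, 0 < r ∧ ∀ l : List R, (∀ x ∈ l, x ∈ m) → r ≤ l.length → l.prod = 0 := by
  classical
  -- powers of m
  let J : ℕ → Submodule R R := fun j => Nat.rec (motive := fun _ => Submodule R R) ⊤ (fun _ N => m • N) j
  have hJsucc : ∀ j, J (j + 1) = m • J j := fun j => rfl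
  have hJdesc : ∀ j, J (j + 1) ≤ J j := by
    intro j
    rw [hJsucc]
    exact Submodule.smul_le.mpr fun r _ n hn => Submodule.smul_mem _ r hn
  have hJanti : ∀ {i j}, i ≤ j → J j ≤ J i := by
    intro i j hij
    induction hij with
    | refl => exact le_rfl
    | step _ ih => exact le_trans (hJdesc _) ih
  -- each J j is spanned by a finite set over R
  have hJfg : ∀ j, ∃ s : Finset R, Submodule.span R (s : Set R) = J j := by
    intro j
    have hfg : ((J j).restrictScalars k).FG := IsNoetherian.noetherian _
    obtain ⟨S, hSfin, hS⟩ := Submodule.fg_def.mp hfg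
    refine ⟨hSfin.toFinset, le_antisymm ?_ ?_⟩
    · rw [Submodule.span_le]
      intro x hxS
      have : x ∈ Submodule.span k S := Submodule.subset_span (by simpa using hxS)
      rw [hS] at this
      exact this
    · intro x hx
      have hx' : x ∈ Submodule.span k S := by rw [hS]; exact hx
      have := Submodule.span_le_restrictScalars k R S hx'
      simpa using this
  -- the chain stabilizes and hits ⊥
  have hbot : ∃ j, J j = ⊥ := by
    by_contra hcon
    push_neg at hcon
    have hstrict : ∀ j, J (j + 1) < J j := by
      intro j
      rcases lt_or_eq_of_le (hJdesc j) with h | h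
      · exact h
      · exfalso
        obtain ⟨s, hs⟩ := hJfg j
        exact hcon j (aux_nakayama m hm2 hmn (J j) (by rw [← hJsucc, h]) s hs)
    have hrank : ∀ j, Module.finrank k ↥((J j).restrictScalars k) + j ≤ Module.finrank k R := by
      intro j
      induction j with
      | zero =>
        simpa using Submodule.finrank_le (R := k) (M := R) ((J 0).restrictScalars k)
      | succ j ih =>
        have hlt : (J (j+1)).restrictScalars k < (J j).restrictScalars k := by
          refine lt_of_le_of_ne ?_ ?_
          · exact fun x hx => hJdesc j hx
          · intro h
            exact (hstrict j).ne (Submodule.restrictScalars_injective k R R h)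
        have := Submodule.finrank_lt_finrank_of_lt
          (s := (J (j+1)).restrictScalars k) (t := (J j).restrictScalars k) hlt
        omega
    have := hrank (Module.finrank k R + 1)
    omega
  obtain ⟨j, hj⟩ := hbot
  refine ⟨j + 1, Nat.succ_pos j, fun l hl hlen => ?_⟩
  -- products lie in the powers of m
  have hprod : ∀ l : List R, (∀ x ∈ l, x ∈ m) → l.prod ∈ J l.length := by
    intro l
    induction l with
    | nil => intro _; exact Submodule.mem_top
    | cons x l ih =>
      intro h
      rw [List.prod_cons, List.length_cons, hJsucc]
      exact Submodule.smul_mem_smul (h x (List.mem_cons_self (a := x) (l := l))) (ih fun y hy => h y (List.mem_cons_of_mem x hy))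
  have h1 : l.prod ∈ J l.length := hprod l hl
  have h2 : J l.length ≤ J (j + 1) := hJanti hlen
  have h3 : J (j + 1) ≤ ⊥ := le_trans (hJdesc j) (le_of_eq hj)
  simpa using h3 (h2 h1)

open TensorProduct Coalgebra

section Conv
variable {k A : Type*} [CommRing k] [Ring A] [Bialgebra k A]

/-- Convolution product on `End(A)`. -/
noncomputable def auxConv (f g : A →ₗ[k] A) : A →ₗ[k] A :=
  LinearMap.mul' k A ∘ₗ TensorProduct.map f g ∘ₗ Coalgebra.comul

/-- Convolution unit `η ∘ ε`. -/
noncomputable def auxU : A →ₗ[k] A := Algebra.linearMap k A ∘ₗ Coalgebra.counit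

lemma auxConv_apply (f g : A →ₗ[k] A) (a : A) (re : Coalgebra.Repr k a (A × A)) :
    auxConv f g a = ∑ i ∈ re.index, f (re.left i) * g (re.right i) := by
  simp only [auxConv, LinearMap.comp_apply]
  rw [← re.eq, map_sum, map_sum]
  simp

lemma auxConv_u_right (f : A →ₗ[k] A) : auxConv f auxU = f := by
  ext a
  have h := congrArg (TensorProduct.rid k A) (Coalgebra.sum_tmul_counit_eq (ℛ k a))
  simp only [map_sum, rid_tmul, one_smul] at h
  rw [auxConv_apply f auxU a (ℛ k a)]
  simp only [auxU, LinearMap.comp_apply, Algebra.linearMap_apply,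
    Algebra.algebraMap_eq_smul_one, mul_smul_comm, mul_one]
  simp_rw [← LinearMap.map_smul, ← map_sum, h]

lemma auxConv_u_left (f : A →ₗ[k] A) : auxConv auxU f = f := by
  ext a
  have h := congrArg (TensorProduct.lid k A) (Coalgebra.sum_counit_tmul_eq (ℛ k a))
  simp only [map_sum, lid_tmul, one_smul] at h
  rw [auxConv_apply auxU f a (ℛ k a)]
  simp only [auxU, LinearMap.comp_apply, Algebra.linearMap_apply,
    Algebra.algebraMap_eq_smul_one, smul_mul_assoc, one_mul]
  simp_rw [← LinearMap.map_smul, ← map_sum, h]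

lemma auxConv_assoc (f g h : A →ₗ[k] A) :
    auxConv (auxConv f g) h = auxConv f (auxConv g h) := by
  have hmul : LinearMap.mul' k A ∘ₗ LinearMap.rTensor A (LinearMap.mul' k A)
      = LinearMap.mul' k A ∘ₗ LinearMap.lTensor A (LinearMap.mul' k A) ∘ₗ
        (TensorProduct.assoc k A A A).toLinearMap := by
    apply TensorProduct.ext_threefold
    intro x y z
    simp [mul_assoc]
  have e1 : auxConv (auxConv f g) h
      = LinearMap.mul' k A ∘ₗ LinearMap.rTensor A (LinearMap.mul' k A) ∘ₗ
        TensorProduct.map (TensorProduct.map f g) h ∘ₗ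
        LinearMap.rTensor A (Coalgebra.comul) ∘ₗ Coalgebra.comul := by
    simp only [auxConv]
    congr 1
    rw [← LinearMap.comp_assoc, ← LinearMap.comp_assoc, ← LinearMap.comp_assoc]
    congr 1
    rw [LinearMap.comp_assoc]
    ext x y
    simp [LinearMap.rTensor]
  have e2 : auxConv f (auxConv g h)
      = LinearMap.mul' k A ∘ₗ LinearMap.lTensor A (LinearMap.mul' k A) ∘ₗ
        TensorProduct.map f (TensorProduct.map g h) ∘ₗ
        LinearMap.lTensor A (Coalgebra.comul) ∘ₗ Coalgebra.comul := by
    simp only [auxConv]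
    congr 1
    rw [← LinearMap.comp_assoc, ← LinearMap.comp_assoc, ← LinearMap.comp_assoc]
    congr 1
    rw [LinearMap.comp_assoc]
    ext x y
    simp [LinearMap.lTensor]
  rw [e1, e2]
  rw [← Coalgebra.coassoc]
  calc LinearMap.mul' k A ∘ₗ LinearMap.rTensor A (LinearMap.mul' k A) ∘ₗ
        TensorProduct.map (TensorProduct.map f g) h ∘ₗ
        LinearMap.rTensor A (Coalgebra.comul) ∘ₗ Coalgebra.comul
      = (LinearMap.mul' k A ∘ₗ LinearMap.lTensor A (LinearMap.mul' k A)) ∘ₗ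
        ((TensorProduct.assoc k A A A).toLinearMap ∘ₗ
          TensorProduct.map (TensorProduct.map f g) h) ∘ₗ
        LinearMap.rTensor A (Coalgebra.comul) ∘ₗ Coalgebra.comul := by
        rw [← LinearMap.comp_assoc, ← LinearMap.comp_assoc, hmul]
        simp only [LinearMap.comp_assoc]
    _ = LinearMap.mul' k A ∘ₗ LinearMap.lTensor A (LinearMap.mul' k A) ∘ₗ
        TensorProduct.map f (TensorProduct.map g h) ∘ₗ
        (TensorProduct.assoc k A A A).toLinearMap ∘ₗ
        LinearMap.rTensor A (Coalgebra.comul) ∘ₗ Coalgebra.comul := by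
        rw [← TensorProduct.map_map_comp_assoc_eq]
        simp only [LinearMap.comp_assoc]

lemma auxConv_add_left (f g h : A →ₗ[k] A) :
    auxConv (f + g) h = auxConv f h + auxConv g h := by
  simp only [auxConv, TensorProduct.map_add_left]
  ext a; simp

lemma auxConv_add_right (f g h : A →ₗ[k] A) :
    auxConv f (g + h) = auxConv f g + auxConv f h := by
  simp only [auxConv, TensorProduct.map_add_right]
  ext a; simp

lemma auxConv_smul_left (c : k) (f g : A →ₗ[k] A) :
    auxConv (c • f) g = c • auxConv f g := by
  simp only [auxConv, TensorProduct.map_smul_left]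
  ext a; simp

lemma auxConv_smul_right (c : k) (f g : A →ₗ[k] A) :
    auxConv f (c • g) = c • auxConv f g := by
  simp only [auxConv, TensorProduct.map_smul_right]
  ext a; simp

lemma auxConv_zero_left (g : A →ₗ[k] A) : auxConv (0 : A →ₗ[k] A) g = 0 := by
  simp only [auxConv]
  ext a
  simp [TensorProduct.map_zero_left]

lemma auxConv_zero_right (g : A →ₗ[k] A) : auxConv g (0 : A →ₗ[k] A) = 0 := by
  simp only [auxConv]
  ext a
  simp [TensorProduct.map_zero_right]

lemma auxConv_sum_left {ι : Type*} (s : Finset ι) (f : ι → (A →ₗ[k] A)) (g : A →ₗ[k] A) :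
    auxConv (∑ i ∈ s, f i) g = ∑ i ∈ s, auxConv (f i) g := by
  classical
  induction s using Finset.induction with
  | empty => simpa using auxConv_zero_left g
  | insert a s' h ih => rw [Finset.sum_insert h, Finset.sum_insert h,
      auxConv_add_left, ih]

lemma auxConv_sum_right {ι : Type*} (s : Finset ι) (f : A →ₗ[k] A) (g : ι → (A →ₗ[k] A)) :
    auxConv f (∑ i ∈ s, g i) = ∑ i ∈ s, auxConv f (g i) := by
  classical
  induction s using Finset.induction with
  | empty => simpa using auxConv_zero_right f
  | insert a s' h ih => rw [Finset.sum_insert h, Finset.sum_insert h,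
      auxConv_add_right, ih]

end Conv

section Graded
variable {k A : Type*} [Field k] [Ring A] [Bialgebra k A]

/-- The combinatorial vanishing lemma: a long product of homogeneous elements of the
augmentation ideal, of bounded total degree, vanishes. -/
theorem aux_list_vanish (𝒜 : ℕ → Submodule k A) (r : ℕ) (hr : 0 < r)
    (hm : ∀ l : List A, (∀ x ∈ l, x ∈ 𝒜 0 ∧ Coalgebra.counit (R := k) x = 0) →
      r ≤ l.length → l.prod = 0) :
    ∀ n (l : List (ℕ × A)),
      (∀ p ∈ l, p.2 ∈ 𝒜 p.1 ∧ Coalgebra.counit (R := k) p.2 = 0) →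
      (l.map Prod.fst).sum = n → (n + 1) * r < l.length → (l.map Prod.snd).prod = 0 := by
  intro n
  induction n using Nat.strong_induction_on with
  | _ n ih =>
    intro l hl hsum hlen
    have hrlen : r ≤ l.length := le_trans (Nat.le_mul_of_pos_left r n.succ_pos) (le_of_lt hlen)
    by_cases hz : ∀ p ∈ l.take r, p.1 = 0
    · -- the first r factors are in the augmentation ideal of 𝒜 0
      have h0 : ((l.take r).map Prod.snd).prod = 0 := by
        refine hm _ ?_ ?_
        · intro x hx
          obtain ⟨p, hp, rfl⟩ := List.mem_map.mp hx
          have hpl : p ∈ l := List.mem_of_mem_take hp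
          have := hl p hpl
          rw [hz p hp] at this
          exact this
        · simp [List.length_take]
          omega
      have : l.map Prod.snd = (l.take r).map Prod.snd ++ (l.drop r).map Prod.snd := by
        rw [← List.map_append, List.take_append_drop]
      rw [this, List.prod_append, h0, zero_mul]
    · push_neg at hz
      obtain ⟨p, hp, hp0⟩ := hz
      obtain ⟨j, hjlt, hj⟩ := List.getElem_of_mem hp
      have hjr : j < r := lt_of_lt_of_le hjlt (by simp [List.length_take])
      have hjl : j < l.length := lt_of_lt_of_le hjlt (by simp [List.length_take])
      have hlj : l[j] = p := by rw [← hj, List.getElem_take]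
      set t := l.drop (j + 1) with ht
      set n' := (t.map Prod.fst).sum with hn'
      -- split the sum of degrees
      have hsplit : l = l.take (j + 1) ++ t := (List.take_append_drop (j + 1) l).symm
      have hsum2 : ((l.take (j + 1)).map Prod.fst).sum + n' = n := by
        rw [hn', ← List.sum_append, ← List.map_append, ← hsplit, hsum]
      have hmemtake : l[j] ∈ l.take (j + 1) := by
        have h1 : j < (l.take (j + 1)).length := by simp [List.length_take]; omega
        have := List.getElem_mem h1
        rwa [List.getElem_take] at this
      have hge1 : 1 ≤ ((l.take (j + 1)).map Prod.fst).sum := by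
        have : l[j].1 ≤ ((l.take (j + 1)).map Prod.fst).sum :=
          List.le_sum_of_mem (List.mem_map.mpr ⟨l[j], hmemtake, rfl⟩)
        have hpos : 0 < l[j].1 := by rw [hlj]; omega
        omega
      have hn'lt : n' < n := by omega
      have hlent : (n' + 1) * r < t.length := by
        have htlen : t.length = l.length - (j + 1) := by simp [ht]
        have h1 : (n' + 1) * r ≤ n * r := Nat.mul_le_mul_right r (by omega)
        have h2 : n * r + r = (n + 1) * r := by ring
        omega
      have h0 : (t.map Prod.snd).prod = 0 :=
        ih n' hn'lt t (fun q hq => hl q (List.mem_of_mem_drop hq)) rfl hlent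
      have : l.map Prod.snd = (l.take (j + 1)).map Prod.snd ++ t.map Prod.snd := by
        rw [← List.map_append, ← hsplit]
      rw [this, List.prod_append, h0, mul_zero]

/-- Span of products of `N` homogeneous counit-killed elements of total degree `n`. -/
noncomputable def auxSub (𝒜 : ℕ → Submodule k A) (n N : ℕ) : Submodule k A :=
  Submodule.span k {x | ∃ l : List (ℕ × A),
    (∀ p ∈ l, p.2 ∈ 𝒜 p.1 ∧ Coalgebra.counit (R := k) p.2 = 0) ∧
    l.length = N ∧ (l.map Prod.fst).sum = n ∧ (l.map Prod.snd).prod = x}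

/-- Convolution powers of `id - η∘ε`. -/
noncomputable def auxFpow : ℕ → (A →ₗ[k] A)
  | 0 => auxU
  | N + 1 => auxConv (auxFpow N) (LinearMap.id - auxU)

lemma auxConv_sub_left (f g h : A →ₗ[k] A) :
    auxConv (f - g) h = auxConv f h - auxConv g h := by
  rw [sub_eq_add_neg, ← neg_one_smul k g, auxConv_add_left, auxConv_smul_left,
    neg_one_smul k (M := A →ₗ[k] A), ← sub_eq_add_neg]

lemma auxConv_sub_right (f g h : A →ₗ[k] A) :
    auxConv f (g - h) = auxConv f g - auxConv f h := by
  rw [sub_eq_add_neg, ← neg_one_smul k h, auxConv_add_right, auxConv_smul_right,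
    neg_one_smul k (M := A →ₗ[k] A), ← sub_eq_add_neg]

lemma auxFpow_succ_left (N : ℕ) :
    auxConv (LinearMap.id - auxU) (auxFpow N : A →ₗ[k] A) = auxFpow (N + 1) := by
  induction N with
  | zero =>
    show auxConv (LinearMap.id - auxU) auxU = auxConv auxU (LinearMap.id - auxU)
    rw [auxConv_u_right, auxConv_u_left]
  | succ N ih =>
    show auxConv (LinearMap.id - auxU) (auxConv (auxFpow N) (LinearMap.id - auxU))
      = auxConv (auxFpow (N + 1)) (LinearMap.id - auxU)
    rw [← auxConv_assoc, ih]

/-- Applying a convolution-type expression to a homogeneous element lands in a submodule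
provided all the graded pieces do. -/
lemma aux_conv_mem (𝒜 : ℕ → Submodule k A)
    (hcomul : ∀ (i : ℕ), ∀ a ∈ 𝒜 i,
      Coalgebra.comul (R := k) a ∈
        ⨆ (p : ℕ × ℕ) (_ : p.1 + p.2 = i),
          LinearMap.range (TensorProduct.map (𝒜 p.1).subtype (𝒜 p.2).subtype))
    {n : ℕ} {a : A} (ha : a ∈ 𝒜 n) (g h : A →ₗ[k] A) (P : Submodule k A)
    (H : ∀ p q : ℕ, p + q = n → ∀ x ∈ 𝒜 p, ∀ y ∈ 𝒜 q, g x * h y ∈ P) :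
    auxConv g h a ∈ P := by
  have hc := hcomul n a ha
  show (LinearMap.mul' k A) (TensorProduct.map g h (Coalgebra.comul a)) ∈ P
  refine Submodule.iSup_induction _ (motive := fun t =>
    (LinearMap.mul' k A) (TensorProduct.map g h t) ∈ P) hc ?_ (by simp) ?_
  · rintro ⟨p, q⟩ t ht
    by_cases hpq : p + q = n
    · rw [iSup_pos hpq] at ht
      obtain ⟨s, rfl⟩ := ht
      induction s using TensorProduct.induction_on with
      | zero => simp
      | tmul x y =>
        simpa using H p q hpq x.1 x.2 y.1 y.2
      | add s1 s2 ih1 ih2 =>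
        rw [map_add, map_add, map_add]
        exact P.add_mem ih1 ih2
    · rw [iSup_neg hpq] at ht
      simp only [Submodule.mem_bot] at ht
      simp [ht]
  · intro x y hx hy
    rw [map_add, map_add]
    exact P.add_mem hx hy

lemma auxSub_mul (𝒜 : ℕ → Submodule k A) [SetLike.GradedMonoid 𝒜] {n N q : ℕ} {z w : A}
    (hz : z ∈ auxSub 𝒜 n N) (hw : w ∈ 𝒜 q) (hεw : Coalgebra.counit (R := k) w = 0) :
    z * w ∈ auxSub 𝒜 (n + q) (N + 1) := by
  refine Submodule.span_induction ?_ ?_ ?_ ?_ hz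
  · rintro x ⟨l, hl, hlen, hsum, rfl⟩
    refine Submodule.subset_span ⟨l ++ [(q, w)], ?_, ?_, ?_, ?_⟩
    · intro p hp
      rcases List.mem_append.mp hp with h | h
      · exact hl p h
      · simp at h; subst h; exact ⟨hw, hεw⟩
    · simp [hlen]
    · simp [hsum]
    · simp
  · simp
  · intro x y _ _ hx hy
    rw [add_mul]
    exact Submodule.add_mem _ hx hy
  · intro c x _ hx
    rw [smul_mul_assoc]
    exact Submodule.smul_mem _ c hx

lemma auxFpow_mem (𝒜 : ℕ → Submodule k A) [SetLike.GradedMonoid 𝒜]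
    (hcomul : ∀ (i : ℕ), ∀ a ∈ 𝒜 i,
      Coalgebra.comul (R := k) a ∈
        ⨆ (p : ℕ × ℕ) (_ : p.1 + p.2 = i),
          LinearMap.range (TensorProduct.map (𝒜 p.1).subtype (𝒜 p.2).subtype))
    (hcounit : ∀ (i : ℕ), i ≠ 0 → ∀ a ∈ 𝒜 i, Coalgebra.counit (R := k) a = 0) :
    ∀ (N n : ℕ) (a : A), a ∈ 𝒜 n → (auxFpow N : A →ₗ[k] A) a ∈ auxSub 𝒜 n N := by
  intro N
  induction N with
  | zero =>
    intro n a ha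
    show (auxU : A →ₗ[k] A) a ∈ auxSub 𝒜 n 0
    rcases eq_or_ne n 0 with rfl | hn
    · have h1 : (1 : A) ∈ auxSub 𝒜 0 0 :=
        Submodule.subset_span ⟨[], by simp, by simp, by simp, by simp⟩
      have : (auxU : A →ₗ[k] A) a = Coalgebra.counit (R := k) a • (1 : A) := by
        simp [auxU, Algebra.algebraMap_eq_smul_one]
      rw [this]
      exact Submodule.smul_mem _ _ h1
    · have : (auxU : A →ₗ[k] A) a = 0 := by
        simp [auxU, hcounit n hn a ha]
      rw [this]
      exact Submodule.zero_mem _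
  | succ N ih =>
    intro n a ha
    show auxConv (auxFpow N : A →ₗ[k] A) (LinearMap.id - auxU) a ∈ auxSub 𝒜 n (N + 1)
    refine aux_conv_mem 𝒜 hcomul ha _ _ _ ?_
    intro p q hpq x hx y hy
    have hff : (LinearMap.id - auxU : A →ₗ[k] A) y ∈ 𝒜 q ∧
        Coalgebra.counit (R := k) ((LinearMap.id - auxU : A →ₗ[k] A) y) = 0 := by
      have hεy1 : (LinearMap.id - auxU : A →ₗ[k] A) y = y - Coalgebra.counit (R := k) y • 1 := by
        simp [auxU, Algebra.algebraMap_eq_smul_one]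
      rcases eq_or_ne q 0 with rfl | hq
      · constructor
        · rw [hεy1]
          exact Submodule.sub_mem _ hy (Submodule.smul_mem _ _ (SetLike.one_mem_graded 𝒜))
        · rw [hεy1, map_sub, map_smul]
          simp [Bialgebra.counit_one, smul_eq_mul]
      · have hεy : Coalgebra.counit (R := k) y = 0 := hcounit q hq y hy
        rw [hεy1, hεy, zero_smul, sub_zero]
        exact ⟨hy, hεy⟩
    have := auxSub_mul 𝒜 (ih p x hx) hff.1 hff.2
    rwa [hpq] at this

/-- Truncated geometric series for the convolution inverse. -/
noncomputable def auxT (K : ℕ) : A →ₗ[k] A :=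
  ∑ N ∈ Finset.range (K + 1), ((-1 : k) ^ N) • auxFpow N

lemma aux_id_split : (LinearMap.id : A →ₗ[k] A) = auxU + (LinearMap.id - auxU) :=
  (add_sub_cancel _ _).symm

lemma auxConv_fpow_id (N : ℕ) :
    auxConv (auxFpow N : A →ₗ[k] A) LinearMap.id = auxFpow N + auxFpow (N + 1) := by
  conv_lhs => rw [aux_id_split]
  rw [auxConv_add_right, auxConv_u_right]
  rfl

lemma auxConv_id_fpow (N : ℕ) :
    auxConv LinearMap.id (auxFpow N : A →ₗ[k] A) = auxFpow N + auxFpow (N + 1) := by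
  conv_lhs => rw [aux_id_split]
  rw [auxConv_add_left, auxConv_u_left, auxFpow_succ_left]

lemma auxConv_T_id (K : ℕ) :
    auxConv (auxT K : A →ₗ[k] A) LinearMap.id
      = auxU + ((-1 : k) ^ K) • auxFpow (K + 1) := by
  rw [auxT, auxConv_sum_left]
  have hstep : ∀ N, auxConv ((-1 : k) ^ N • (auxFpow N : A →ₗ[k] A)) LinearMap.id
      = ((-1 : k) ^ N • (auxFpow N : A →ₗ[k] A))
        - ((-1 : k) ^ (N + 1) • auxFpow (N + 1)) := by
    intro N
    rw [auxConv_smul_left, auxConv_fpow_id, smul_add, pow_succ, mul_neg_one, neg_smul (R := k) (M := A →ₗ[k] A),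
      sub_neg_eq_add]
  simp_rw [hstep]
  rw [Finset.sum_range_sub' (fun N => (-1 : k) ^ N • (auxFpow N : A →ₗ[k] A)) (K + 1)]
  rw [pow_zero, one_smul, pow_succ, mul_neg_one, neg_smul (R := k) (M := A →ₗ[k] A), sub_neg_eq_add]
  rfl

lemma auxConv_id_T (K : ℕ) :
    auxConv LinearMap.id (auxT K : A →ₗ[k] A)
      = auxU + ((-1 : k) ^ K) • auxFpow (K + 1) := by
  rw [auxT, auxConv_sum_right]
  have hstep : ∀ N, auxConv LinearMap.id ((-1 : k) ^ N • (auxFpow N : A →ₗ[k] A))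
      = ((-1 : k) ^ N • (auxFpow N : A →ₗ[k] A))
        - ((-1 : k) ^ (N + 1) • auxFpow (N + 1)) := by
    intro N
    rw [auxConv_smul_right, auxConv_id_fpow, smul_add, pow_succ, mul_neg_one, neg_smul (R := k) (M := A →ₗ[k] A),
      sub_neg_eq_add]
  simp_rw [hstep]
  rw [Finset.sum_range_sub' (fun N => (-1 : k) ^ N • (auxFpow N : A →ₗ[k] A)) (K + 1)]
  rw [pow_zero, one_smul, pow_succ, mul_neg_one, neg_smul (R := k) (M := A →ₗ[k] A), sub_neg_eq_add]
  rfl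

end Graded

/-- A positively graded bialgebra `A` over a field `k`, graded-local (its degree-zero part
`𝒜 0` is a local ring), of finite type (each `𝒜 i` finite-dimensional), whose
comultiplication and counit respect the grading, admits an antipode: a `k`-linear map
`S : A → A` with `S ∗ id = η ∘ ε = id ∗ S` for the convolution product, making `A` a
(graded) Hopf algebra. -/
theorem stmt13 {k A : Type*} [Field k] [Ring A] [Bialgebra k A]
    (𝒜 : ℕ → Submodule k A) [GradedAlgebra 𝒜]
    (hcomul : ∀ (i : ℕ), ∀ a ∈ 𝒜 i,
      Coalgebra.comul (R := k) a ∈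
        ⨆ (p : ℕ × ℕ) (_ : p.1 + p.2 = i),
          LinearMap.range (TensorProduct.map (𝒜 p.1).subtype (𝒜 p.2).subtype))
    (hcounit : ∀ (i : ℕ), i ≠ 0 → ∀ a ∈ 𝒜 i, Coalgebra.counit (R := k) a = 0)
    (hloc : IsLocalRing ↥(𝒜 0))
    (hfin : ∀ i, FiniteDimensional k ↥(𝒜 i)) :
    ∃ S : A →ₗ[k] A,
      (LinearMap.mul' k A) ∘ₗ (TensorProduct.map S LinearMap.id) ∘ₗ
          (Coalgebra.comul (R := k)) =
        (Algebra.linearMap k A) ∘ₗ (Coalgebra.counit (R := k)) ∧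
      (LinearMap.mul' k A) ∘ₗ (TensorProduct.map LinearMap.id S) ∘ₗ
          (Coalgebra.comul (R := k)) =
        (Algebra.linearMap k A) ∘ₗ (Coalgebra.counit (R := k)) := by
  classical
  haveI := hloc
  haveI : FiniteDimensional k ↥(𝒜 0) := hfin 0
  -- the counit as a ring hom on the degree-zero part
  let εR : ↥(𝒜 0) →+* k :=
    { toFun := fun x => Coalgebra.counit (R := k) (x : A)
      map_one' := Bialgebra.counit_one
      map_mul' := fun x y => by
        show Coalgebra.counit (R := k) ((x : A) * (y : A)) = _
        exact Bialgebra.counit_mul (x : A) (y : A)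
      map_zero' := by simp
      map_add' := fun x y => by
        show Coalgebra.counit (R := k) ((x : A) + (y : A)) = _
        exact map_add _ _ _ }
  -- the augmentation ideal of the degree-zero part is nilpotent
  obtain ⟨r, hrpos, hrnil⟩ := aux_nilpotent (k := k) (RingHom.ker εR)
    (fun a ha b => by
      rw [RingHom.mem_ker] at ha ⊢
      rw [map_mul, ha, zero_mul])
    (fun a ha hu => by
      rw [RingHom.mem_ker] at ha
      obtain ⟨v, hv⟩ := hu
      have := congrArg εR (Units.mul_inv v)
      rw [map_mul, map_one, hv, ha, zero_mul] at this
      exact zero_ne_one this)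
  -- transfer nilpotency to products in `A`
  have hm : ∀ l : List A, (∀ x ∈ l, x ∈ 𝒜 0 ∧ Coalgebra.counit (R := k) x = 0) →
      r ≤ l.length → l.prod = 0 := by
    intro l hl hlen
    let l' : List ↥(𝒜 0) := l.attach.map (fun x => (⟨x.1, (hl x.1 x.2).1⟩ : ↥(𝒜 0)))
    have hcoe : ∀ t : List ↥(𝒜 0), ((t.prod : ↥(𝒜 0)) : A) = (t.map (Subtype.val : ↥(𝒜 0) → A)).prod := by
      intro t
      induction t with
      | nil => rfl
      | cons x t ih => rw [List.prod_cons, List.map_cons, List.prod_cons, ← ih]; rfl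
    have hl'mem : ∀ x ∈ l', x ∈ RingHom.ker εR := by
      intro x hx
      obtain ⟨y, _, rfl⟩ := List.mem_map.mp hx
      exact (hl y.1 y.2).2
    have hl'len : r ≤ l'.length := by
      simpa [l'] using hlen
    have h0 := hrnil l' hl'mem hl'len
    have : l.prod = ((l'.prod : ↥(𝒜 0)) : A) := by
      rw [hcoe, List.map_map]
      exact congrArg List.prod (((List.attach_map_val (l := l) (f := id)).trans (List.map_id l)).symm)
    rw [this, h0]
    rfl
  -- convolution powers of `id - η∘ε` vanish in bounded degree
  have hvanish : ∀ (n : ℕ) (a : A), a ∈ 𝒜 n → ∀ N, (n + 1) * r < N →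
      (auxFpow N : A →ₗ[k] A) a = 0 := by
    intro n a ha N hN
    have h1 := auxFpow_mem 𝒜 hcomul hcounit N n a ha
    have h2 : auxSub 𝒜 n N ≤ ⊥ := by
      rw [auxSub, Submodule.span_le]
      rintro x ⟨l, hl, hlen, hsum, rfl⟩
      simp only [SetLike.mem_coe, Submodule.mem_bot]
      exact aux_list_vanish 𝒜 r hrpos hm n l hl hsum (hlen ▸ hN)
    simpa using h2 h1
  -- the degree-dependent truncation bound
  set c : ℕ → ℕ := fun n => (n + 1) * r + 1 with hc
  have hcmono : ∀ {p n : ℕ}, p ≤ n → c p ≤ c n := by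
    intro p n h
    simp only [hc]
    have := Nat.mul_le_mul (Nat.add_le_add_right h 1) (le_refl r)
    omega
  -- the antipode
  set S : A →ₗ[k] A :=
    (DirectSum.toModule k ℕ A (fun n => (auxT (c n) : A →ₗ[k] A) ∘ₗ (𝒜 n).subtype)) ∘ₗ
      (DirectSum.decomposeLinearEquiv 𝒜).toLinearMap with hS
  have hSmem : ∀ {p : ℕ} (x : A), x ∈ 𝒜 p → S x = (auxT (c p) : A →ₗ[k] A) x := by
    intro p x hx
    rw [hS]
    simp only [LinearMap.comp_apply, LinearEquiv.coe_coe,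
      DirectSum.decomposeLinearEquiv_apply]
    rw [DirectSum.decompose_of_mem 𝒜 hx, ← DirectSum.lof_eq_of k, DirectSum.toModule_lof]
    rfl
  have hSeq : ∀ {p : ℕ} (x : A), x ∈ 𝒜 p → ∀ K, c p ≤ K → S x = (auxT K : A →ₗ[k] A) x := by
    intro p x hx K hK
    rw [hSmem x hx]
    have : (auxT K : A →ₗ[k] A) x = ∑ N ∈ Finset.range (K + 1), ((-1 : k) ^ N) • (auxFpow N : A →ₗ[k] A) x := by
      rw [auxT]
      simp [LinearMap.sum_apply]
    rw [this]
    have : (auxT (c p) : A →ₗ[k] A) x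
        = ∑ N ∈ Finset.range (c p + 1), ((-1 : k) ^ N) • (auxFpow N : A →ₗ[k] A) x := by
      rw [auxT]
      simp [LinearMap.sum_apply]
    rw [this]
    refine Finset.sum_subset (by simp [Nat.succ_le_succ hK]) ?_
    intro N _ hN
    simp only [Finset.mem_range, not_lt] at hN
    rw [hvanish p x hx N (by simp only [hc] at hN ⊢; omega), smul_zero]
  refine ⟨S, ?_, ?_⟩
  · -- left antipode identity
    show auxConv S LinearMap.id = auxU
    apply LinearMap.ext
    intro a
    induction a using DirectSum.Decomposition.inductionOn 𝒜 with
    | zero => simp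
    | homogeneous m =>
      rename_i n
      obtain ⟨a, ha⟩ := m
      show auxConv S LinearMap.id a = auxU a
      have hdiff : auxConv ((S - auxT (c n) : A →ₗ[k] A)) LinearMap.id a = 0 := by
        have hb : auxConv ((S - auxT (c n) : A →ₗ[k] A)) LinearMap.id a ∈ (⊥ : Submodule k A) := by
          refine aux_conv_mem 𝒜 hcomul ha _ _ ⊥ ?_
          intro p q hpq x hx y hy
          have hxS : (S - auxT (c n) : A →ₗ[k] A) x = 0 := by
            rw [LinearMap.sub_apply, hSeq x hx (c n) (hcmono (hpq ▸ Nat.le_add_right p q)),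
              sub_self]
          simp [hxS]
        simpa using hb
      rw [auxConv_sub_left, LinearMap.sub_apply] at hdiff
      have h1 : auxConv S LinearMap.id a = auxConv (auxT (c n) : A →ₗ[k] A) LinearMap.id a := by
        exact sub_eq_zero.mp hdiff
      rw [h1, auxConv_T_id]
      simp only [LinearMap.add_apply, LinearMap.smul_apply]
      rw [hvanish n a ha (c n + 1) (by simp only [hc]; omega), smul_zero, add_zero]
    | add x y hx hy =>
      rw [map_add, map_add, hx, hy]
  · -- right antipode identity
    show auxConv LinearMap.id S = auxU
    apply LinearMap.ext
    intro a
    induction a using DirectSum.Decomposition.inductionOn 𝒜 with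
    | zero => simp
    | homogeneous m =>
      rename_i n
      obtain ⟨a, ha⟩ := m
      show auxConv LinearMap.id S a = auxU a
      have hdiff : auxConv LinearMap.id ((S - auxT (c n) : A →ₗ[k] A)) a = 0 := by
        have hb : auxConv LinearMap.id ((S - auxT (c n) : A →ₗ[k] A)) a ∈ (⊥ : Submodule k A) := by
          refine aux_conv_mem 𝒜 hcomul ha _ _ ⊥ ?_
          intro p q hpq x hx y hy
          have hyS : (S - auxT (c n) : A →ₗ[k] A) y = 0 := by
            rw [LinearMap.sub_apply, hSeq y hy (c n) (hcmono (hpq ▸ Nat.le_add_left q p)),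
              sub_self]
          simp [hyS]
        simpa using hb
      rw [auxConv_sub_right, LinearMap.sub_apply] at hdiff
      have h1 : auxConv LinearMap.id S a = auxConv LinearMap.id (auxT (c n) : A →ₗ[k] A) a := by
        exact sub_eq_zero.mp hdiff
      rw [h1, auxConv_id_T]
      simp only [LinearMap.add_apply, LinearMap.smul_apply]
      rw [hvanish n a ha (c n + 1) (by simp only [hc]; omega), smul_zero, add_zero]
    | add x y hx hy =>
      rw [map_add, map_add, hx, hy]
end
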